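/- Let G be a finite triangle-free 4-sunspot-free graph that is both liberal and flapless. Let H be a hole of length at least 6 in G, let Φ be an H-flare in G, let h, h' ∈ V(H) be distinct, and let x ∈ Φ[h]. If h and h' are non-adjacent, then x and h' have at most one common neighbor in V(G) \ V(H). -/

import Mathlib

open SimpleGraph

/-- A `4`-sunspot in `G`: seven pairwise distinct vertices whose induced edge set is exactly
`{x₁x₂, x₂x₃, x₃x₄, x₄x₁, x₁y₁, x₂y₂, x₃y₃}`. -/
def IsFourSunspot {V : Type} (G : SimpleGraph V) (x₁ x₂ x₃ x₄ y₁ y₂ y₃ : V) : Prop :=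
  [x₁, x₂, x₃, x₄, y₁, y₂, y₃].Nodup ∧
  G.Adj x₁ x₂ ∧ G.Adj x₂ x₃ ∧ G.Adj x₃ x₄ ∧ G.Adj x₄ x₁ ∧
  G.Adj x₁ y₁ ∧ G.Adj x₂ y₂ ∧ G.Adj x₃ y₃ ∧
  ¬ G.Adj x₁ x₃ ∧ ¬ G.Adj x₂ x₄ ∧
  ¬ G.Adj x₁ y₂ ∧ ¬ G.Adj x₁ y₃ ∧ ¬ G.Adj x₂ y₁ ∧ ¬ G.Adj x₂ y₃ ∧
  ¬ G.Adj x₃ y₁ ∧ ¬ G.Adj x₃ y₂ ∧ ¬ G.Adj x₄ y₁ ∧ ¬ G.Adj x₄ y₂ ∧ ¬ G.Adj x₄ y₃ ∧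
  ¬ G.Adj y₁ y₂ ∧ ¬ G.Adj y₁ y₃ ∧ ¬ G.Adj y₂ y₃

/-- `G` is `4`-sunspot-free if there is no `4`-sunspot in `G`. -/
def FourSunspotFree {V : Type} (G : SimpleGraph V) : Prop :=
  ∀ x₁ x₂ x₃ x₄ y₁ y₂ y₃ : V, ¬ IsFourSunspot G x₁ x₂ x₃ x₄ y₁ y₂ y₃

/-- The `t`-sun: a `t`-vertex cycle (on `Sum.inl` vertices) together with a pendant
(degree-one) neighbor `Sum.inr i` for each cycle vertex `Sum.inl i`. -/
def Sun (t : ℕ) : SimpleGraph (ZMod t ⊕ ZMod t) :=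
  SimpleGraph.fromEdgeSet
    ((Set.range fun i : ZMod t => s(Sum.inl i, Sum.inl (i + 1))) ∪
     (Set.range fun i : ZMod t => s(Sum.inl i, Sum.inr i)))

/-- `G` is `t`-sun-free: no induced subgraph of `G` is a `t`-sun. -/
def SunFree (t : ℕ) {V : Type} (G : SimpleGraph V) : Prop :=
  IsEmpty (Sun t ↪g G)

/-- The bull: a triangle `0,1,2` with pendant vertices `3` (adjacent to `0`)
and `4` (adjacent to `1`). -/
def Bull : SimpleGraph (Fin 5) :=
  SimpleGraph.fromEdgeSet {s(0, 1), s(1, 2), s(0, 2), s(0, 3), s(1, 4)}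

/-- `G` is bull-free: no induced subgraph of `G` is a bull. -/
def BullFree {V : Type} (G : SimpleGraph V) : Prop :=
  IsEmpty (Bull ↪g G)

/-- A hole in `G`: an induced cycle on at least `4` vertices, given as a graph embedding
of the cycle graph. -/
structure Hole {V : Type} (G : SimpleGraph V) where
  len : ℕ
  four_le : 4 ≤ len
  emb : SimpleGraph.cycleGraph len ↪g G

/-- The vertex set of a hole. -/
def Hole.verts {V : Type} {G : SimpleGraph V} (H : Hole G) : Set V :=
  Set.range H.emb

/-- The edge set of a hole. -/
def Hole.edges {V : Type} {G : SimpleGraph V} (H : Hole G) : Set (Sym2 V) :=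
  {e | ∃ i j : Fin H.len, (SimpleGraph.cycleGraph H.len).Adj i j ∧ e = s(H.emb i, H.emb j)}

/-- `G` is liberal: for distinct non-adjacent `x, y`, neither dominates the other. -/
def Liberal {V : Type} (G : SimpleGraph V) : Prop :=
  ∀ x y : V, x ≠ y → ¬ G.Adj x y →
    (G.neighborSet x \ G.neighborSet y).Nonempty ∧
    (G.neighborSet y \ G.neighborSet x).Nonempty

/-- `G` is non-degenerate: every vertex has degree at least `χ(G) - 1`. -/
def NonDegenerate {V : Type} (G : SimpleGraph V) : Prop :=
  ∀ v : V, G.chromaticNumber ≤ ((G.neighborSet v).ncard : ℕ∞) + 1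

/-- `G` is flapless: for every hole `H` of length at least `6` in `G`, there is no `H`-flap,
i.e. no `4`-hole sharing an edge with `H`. -/
def Flapless {V : Type} (G : SimpleGraph V) : Prop :=
  ∀ H : Hole G, 6 ≤ H.len → ∀ F : Hole G, F.len = 4 → ∀ e ∈ F.edges, e ∉ H.edges

/-- An `r`-leveling in `G`: pairwise disjoint nonempty sets `L 0, …, L r` such that every
vertex of `L i` (`i ≥ 1`) has a neighbor in `L (i-1)`, and edges only join consecutive levels. -/
def IsLeveling {V : Type} (G : SimpleGraph V) (r : ℕ) (L : ℕ → Set V) : Prop :=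
  (∀ i, i ≤ r → (L i).Nonempty) ∧
  (∀ i j, i ≤ r → j ≤ r → i ≠ j → Disjoint (L i) (L j)) ∧
  (∀ i, 1 ≤ i → i ≤ r → ∀ v ∈ L i, ∃ u ∈ L (i - 1), G.Adj u v) ∧
  (∀ i j, i ≤ r → j ≤ r → i ≠ j →
    ∀ u ∈ L i, ∀ v ∈ L j, G.Adj u v → i = j + 1 ∨ j = i + 1)

/-- `x` has no sector of length at most `2` in the hole `H`: there is no edge of `H` with both
ends adjacent to `x`, and no path of length `2` in `H` whose ends are adjacent to `x` and whose
middle vertex is not. -/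
def NoSectorLenLe2 {V : Type} (G : SimpleGraph V) (H : Hole G) (x : V) : Prop :=
  (∀ i j : Fin H.len, (SimpleGraph.cycleGraph H.len).Adj i j →
      ¬ (G.Adj x (H.emb i) ∧ G.Adj x (H.emb j))) ∧
  (∀ i j k : Fin H.len, (SimpleGraph.cycleGraph H.len).Adj i j →
      (SimpleGraph.cycleGraph H.len).Adj j k → i ≠ k →
      ¬ (G.Adj x (H.emb i) ∧ ¬ G.Adj x (H.emb j) ∧ G.Adj x (H.emb k)))

/-- `X` and `Y` are anticomplete in `G`: disjoint, with no edge between them. -/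
def Anticomplete {V : Type} (G : SimpleGraph V) (X Y : Set V) : Prop :=
  Disjoint X Y ∧ ∀ x ∈ X, ∀ y ∈ Y, ¬ G.Adj x y

/-- An `H`-flare in `G`: to each vertex `H.emb i` of the hole `H`, assign a set `Φ i` of at
most one vertex, contained in the neighborhood of `H.emb i` and disjoint from `H`. -/
structure IsFlare {V : Type} (G : SimpleGraph V) (H : Hole G) (Φ : Fin H.len → Set V) : Prop where
  subset_nbhd : ∀ i, Φ i ⊆ G.neighborSet (H.emb i) \ H.verts
  subsingleton : ∀ i, (Φ i).Subsingleton

/-- A flare is full if `|Φ i| = 1` for every `i`. -/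
def IsFullFlare {V : Type} (G : SimpleGraph V) (H : Hole G) (Φ : Fin H.len → Set V) : Prop :=
  IsFlare G H Φ ∧ ∀ i, (Φ i).Nonempty

/-- A flare `Φ` is `d`-safe: for distinct hole vertices at distance at most `d` in `H`,
`Φ(h)` and `Φ[h'] = Φ(h') ∪ {h'}` are anticomplete in `G`. -/
def DSafe {V : Type} (G : SimpleGraph V) (H : Hole G) (Φ : Fin H.len → Set V) (d : ℕ) : Prop :=
  ∀ i j : Fin H.len, i ≠ j → (SimpleGraph.cycleGraph H.len).dist i j ≤ d →
    Anticomplete G (Φ i) (Φ j ∪ {H.emb j})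

open Fin.CommRing in
theorem aux_finkey (n : ℕ) [NeZero n] (hn : 6 ≤ n) (j : Fin n) :
    (cycleGraph n).Adj j (j+1) ∧ (cycleGraph n).Adj j (j-1) ∧
      ¬ (cycleGraph n).Adj (j+1) (j-1) ∧ (j+1) ≠ (j-1) := by
  have v1 : (1:Fin n).val = 1 := by rw [Fin.val_one']; exact Nat.mod_eq_of_lt (by omega)
  have v2 : (2:Fin n).val = 2 := by
    rw [show (2:Fin n) = 1+1 by norm_num, Fin.add_def, v1]; exact Nat.mod_eq_of_lt (by omega)
  have v3 : (3:Fin n).val = 3 := by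
    rw [show (3:Fin n) = 1+1+1 by norm_num, Fin.add_def, Fin.add_def, v1]
    simp only [Nat.mod_eq_of_lt (show 1+1 < n by omega)]
    exact Nat.mod_eq_of_lt (by omega)
  refine ⟨?_, ?_, ?_, ?_⟩
  · rw [cycleGraph_adj']; right; rw [show j+1-j = 1 by ring, v1]
  · rw [cycleGraph_adj']; left; rw [show j-(j-1) = 1 by ring, v1]
  · rw [cycleGraph_adj']
    rintro (h | h)
    · rw [show j+1-(j-1) = 2 by ring, v2] at h; omega
    · rw [show j-1-(j+1) = -2 by ring] at h
      have h2 : (-2 : Fin n) = 1 := Fin.val_injective (h.trans v1.symm)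
      have h3 : (3:Fin n) = 0 := by linear_combination -h2
      have := congrArg Fin.val h3
      rw [v3, Fin.val_zero] at this
      omega
  · intro h
    have h2 : (2:Fin n) = 0 := by linear_combination h
    have := congrArg Fin.val h2
    rw [v2, Fin.val_zero] at this
    omega

theorem aux_mkHole4 {V : Type} (G : SimpleGraph V) (a b c d : V)
    (hab : G.Adj a b) (hbc : G.Adj b c) (hcd : G.Adj c d) (hda : G.Adj d a)
    (hac : ¬ G.Adj a c) (hbd : ¬ G.Adj b d) (hac' : a ≠ c) (hbd' : b ≠ d) :
    ∃ F : Hole G, F.len = 4 ∧ s(b, c) ∈ F.edges := by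
  have hba := hab.symm; have hcb := hbc.symm; have hdc := hcd.symm; have had := hda.symm
  have hca : ¬ G.Adj c a := fun h => hac h.symm
  have hdb : ¬ G.Adj d b := fun h => hbd h.symm
  have h1 := G.ne_of_adj hab
  have h2 := G.ne_of_adj hbc
  have h3 := G.ne_of_adj hcd
  have h4 := G.ne_of_adj hda
  have hinj : Function.Injective ![a,b,c,d] := by
    intro u v huv
    fin_cases u <;> fin_cases v <;> simp_all
  have hmap : ∀ {u v : Fin 4}, G.Adj (![a,b,c,d] u) (![a,b,c,d] v) ↔ (cycleGraph 4).Adj u v := by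
    intro u v
    fin_cases u <;> fin_cases v <;>
      simp [hab, hbc, hcd, hda, hba, hcb, hdc, had, hac, hbd, hca, hdb,
        cycleGraph_adj, Fin.ext_iff] <;> decide
  refine ⟨⟨4, by norm_num, ⟨⟨![a,b,c,d], hinj⟩, hmap⟩⟩, rfl, 1, 2, ?_, ?_⟩
  · show (cycleGraph 4).Adj 1 2
    decide
  · rfl

theorem aux_flap4 {V : Type} (G : SimpleGraph V) (hflap : Flapless G)
    (H' : Hole G) (h6 : 6 ≤ H'.len) (a b c d : V)
    (hab : G.Adj a b) (hbc : G.Adj b c) (hcd : G.Adj c d) (hda : G.Adj d a)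
    (hac : ¬ G.Adj a c) (hbd : ¬ G.Adj b d) (hac' : a ≠ c) (hbd' : b ≠ d)
    (he : s(b, c) ∈ H'.edges) : False := by
  obtain ⟨F, hF4, hmem⟩ := aux_mkHole4 G a b c d hab hbc hcd hda hac hbd hac' hbd'
  exact hflap H' h6 F hF4 _ hmem he

theorem aux_mkHole6 {V : Type} (G : SimpleGraph V) (v0 v1 v2 v3 v4 v5 : V)
    (e01 : G.Adj v0 v1) (e12 : G.Adj v1 v2) (e23 : G.Adj v2 v3)
    (e34 : G.Adj v3 v4) (e45 : G.Adj v4 v5) (e50 : G.Adj v5 v0)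
    (n02 : ¬ G.Adj v0 v2) (n03 : ¬ G.Adj v0 v3) (n04 : ¬ G.Adj v0 v4)
    (n13 : ¬ G.Adj v1 v3) (n14 : ¬ G.Adj v1 v4) (n15 : ¬ G.Adj v1 v5)
    (n24 : ¬ G.Adj v2 v4) (n25 : ¬ G.Adj v2 v5) (n35 : ¬ G.Adj v3 v5)
    (d02 : v0 ≠ v2) (d03 : v0 ≠ v3) (d04 : v0 ≠ v4)
    (d13 : v1 ≠ v3) (d14 : v1 ≠ v4) (d15 : v1 ≠ v5)
    (d24 : v2 ≠ v4) (d25 : v2 ≠ v5) (d35 : v3 ≠ v5) :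
    ∃ F : Hole G, F.len = 6 ∧ s(v0, v5) ∈ F.edges := by
  have e10 := e01.symm; have e21 := e12.symm; have e32 := e23.symm
  have e43 := e34.symm; have e54 := e45.symm; have e05 := e50.symm
  have n20 : ¬ G.Adj v2 v0 := fun h => n02 h.symm
  have n30 : ¬ G.Adj v3 v0 := fun h => n03 h.symm
  have n40 : ¬ G.Adj v4 v0 := fun h => n04 h.symm
  have n31 : ¬ G.Adj v3 v1 := fun h => n13 h.symm
  have n41 : ¬ G.Adj v4 v1 := fun h => n14 h.symm
  have n51 : ¬ G.Adj v5 v1 := fun h => n15 h.symm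
  have n42 : ¬ G.Adj v4 v2 := fun h => n24 h.symm
  have n52 : ¬ G.Adj v5 v2 := fun h => n25 h.symm
  have n53 : ¬ G.Adj v5 v3 := fun h => n35 h.symm
  have d01 := G.ne_of_adj e01
  have d12 := G.ne_of_adj e12
  have d23 := G.ne_of_adj e23
  have d34 := G.ne_of_adj e34
  have d45 := G.ne_of_adj e45
  have d05 := (G.ne_of_adj e50).symm
  have hinj : Function.Injective ![v0,v1,v2,v3,v4,v5] := by
    intro u v huv
    fin_cases u <;> fin_cases v <;>
      (first
        | (rfl)
        | (exact absurd huv d01)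
        | (exact absurd huv d01.symm)
        | (exact absurd huv d02)
        | (exact absurd huv d02.symm)
        | (exact absurd huv d03)
        | (exact absurd huv d03.symm)
        | (exact absurd huv d04)
        | (exact absurd huv d04.symm)
        | (exact absurd huv d05)
        | (exact absurd huv d05.symm)
        | (exact absurd huv d12)
        | (exact absurd huv d12.symm)
        | (exact absurd huv d13)
        | (exact absurd huv d13.symm)
        | (exact absurd huv d14)
        | (exact absurd huv d14.symm)
        | (exact absurd huv d15)
        | (exact absurd huv d15.symm)
        | (exact absurd huv d23)
        | (exact absurd huv d23.symm)
        | (exact absurd huv d24)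
        | (exact absurd huv d24.symm)
        | (exact absurd huv d25)
        | (exact absurd huv d25.symm)
        | (exact absurd huv d34)
        | (exact absurd huv d34.symm)
        | (exact absurd huv d35)
        | (exact absurd huv d35.symm)
        | (exact absurd huv d45)
        | (exact absurd huv d45.symm))
  have hmap : ∀ {u v : Fin 6}, G.Adj (![v0,v1,v2,v3,v4,v5] u) (![v0,v1,v2,v3,v4,v5] v) ↔
      (cycleGraph 6).Adj u v := by
    intro u v
    fin_cases u <;> fin_cases v <;>
      (first
        | (exact iff_of_false (G.loopless.irrefl v0) (by decide))
        | (exact iff_of_false (G.loopless.irrefl v1) (by decide))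
        | (exact iff_of_false (G.loopless.irrefl v2) (by decide))
        | (exact iff_of_false (G.loopless.irrefl v3) (by decide))
        | (exact iff_of_false (G.loopless.irrefl v4) (by decide))
        | (exact iff_of_false (G.loopless.irrefl v5) (by decide))
        | (exact iff_of_true e01 (by decide))
        | (exact iff_of_false n02 (by decide))
        | (exact iff_of_false n03 (by decide))
        | (exact iff_of_false n04 (by decide))
        | (exact iff_of_true e05 (by decide))
        | (exact iff_of_true e10 (by decide))
        | (exact iff_of_true e12 (by decide))
        | (exact iff_of_false n13 (by decide))
        | (exact iff_of_false n14 (by decide))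
        | (exact iff_of_false n15 (by decide))
        | (exact iff_of_false n20 (by decide))
        | (exact iff_of_true e21 (by decide))
        | (exact iff_of_true e23 (by decide))
        | (exact iff_of_false n24 (by decide))
        | (exact iff_of_false n25 (by decide))
        | (exact iff_of_false n30 (by decide))
        | (exact iff_of_false n31 (by decide))
        | (exact iff_of_true e32 (by decide))
        | (exact iff_of_true e34 (by decide))
        | (exact iff_of_false n35 (by decide))
        | (exact iff_of_false n40 (by decide))
        | (exact iff_of_false n41 (by decide))
        | (exact iff_of_false n42 (by decide))
        | (exact iff_of_true e43 (by decide))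
        | (exact iff_of_true e45 (by decide))
        | (exact iff_of_true e50 (by decide))
        | (exact iff_of_false n51 (by decide))
        | (exact iff_of_false n52 (by decide))
        | (exact iff_of_false n53 (by decide))
        | (exact iff_of_true e54 (by decide)))
  refine ⟨⟨6, by norm_num, ⟨⟨![v0,v1,v2,v3,v4,v5], hinj⟩, hmap⟩⟩, rfl, 0, 5, ?_, ?_⟩
  · show (cycleGraph 6).Adj 0 5
    decide
  · rfl

theorem aux_tri {V : Type} (G : SimpleGraph V) (htri : G.CliqueFree 3) {a b c : V}
    (hab : G.Adj a b) (hac : G.Adj a c) (hbc : G.Adj b c) : False :=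
  by classical exact htri {a, b, c} (SimpleGraph.is3Clique_triple_iff.mpr ⟨hab, hac, hbc⟩)

/-- Let `G` be a finite triangle-free `4`-sunspot-free graph that is liberal
and flapless, `H` a hole of length at least `6`, `Φ` an `H`-flare, `h = H.emb i` and
`h' = H.emb j` distinct vertices of `H`, and `x ∈ Φ[h]`. If `h` and `h'` are non-adjacent,
then `x` and `h'` have at most one common neighbor in `V(G) \ V(H)`. -/
theorem stmt_13 {V : Type} [Fintype V] (G : SimpleGraph V)
    (htri : G.CliqueFree 3)
    (hspot : FourSunspotFree G)
    (hlib : Liberal G) (hflap : Flapless G)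
    (H : Hole G) (hHlen : 6 ≤ H.len)
    (Φ : Fin H.len → Set V) (hΦ : IsFlare G H Φ)
    (i j : Fin H.len) (hij : i ≠ j)
    (x : V) (hx : x ∈ Φ i ∪ {H.emb i})
    (hnadj : ¬ G.Adj (H.emb i) (H.emb j)) :
    {z : V | z ∉ H.verts ∧ G.Adj x z ∧ G.Adj (H.emb j) z}.Subsingleton := by
  intro z₁ hz₁ z₂ hz₂
  by_contra hne
  obtain ⟨hz₁H, hxz₁, hh'z₁⟩ := hz₁
  obtain ⟨hz₂H, hxz₂, hh'z₂⟩ := hz₂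
  set h' := H.emb j with hh'def
  have tri : ∀ {a b c : V}, G.Adj a b → G.Adj a c → G.Adj b c → False :=
    fun hab hac hbc => aux_tri G htri hab hac hbc
  -- basic non-adjacency facts
  have hnz12 : ¬ G.Adj z₁ z₂ := fun h => tri hxz₁ hxz₂ h
  have hxh' : ¬ G.Adj x h' := fun h => tri h hxz₁ hh'z₁
  have hxneh' : x ≠ h' := by
    rcases hx with hx | hx
    · intro he
      exact ((hΦ.subset_nbhd i hx).2) (he ▸ ⟨j, rfl⟩)
    · simp only [Set.mem_singleton_iff] at hx
      exact fun he => hij (H.emb.injective (hx.symm.trans he))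
  -- the pendant w at x
  obtain ⟨w, hw⟩ := (hlib x h' hxneh' hxh').1
  have hxw : G.Adj x w := hw.1
  have hh'w : ¬ G.Adj h' w := hw.2
  have hwneh' : w ≠ h' := fun he => hxh' (he ▸ hxw)
  -- the two hole-neighbors of h'
  haveI : NeZero H.len := ⟨by omega⟩
  obtain ⟨hcj1, hcjm1, hcnadj, hcne⟩ := aux_finkey H.len hHlen j
  have haa : G.Adj h' (H.emb (j+1)) := H.emb.map_rel_iff.mpr hcj1
  have hbb : G.Adj h' (H.emb (j-1)) := H.emb.map_rel_iff.mpr hcjm1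
  have hea : s(H.emb (j+1), h') ∈ H.edges := ⟨j+1, j, hcj1.symm, rfl⟩
  have heb : s(H.emb (j-1), h') ∈ H.edges := ⟨j-1, j, hcjm1.symm, rfl⟩
  -- choose a hole-neighbor `aa` of h' that is non-adjacent to w
  obtain ⟨aa, haah', heaa, haaH, hwaa⟩ :
      ∃ aa : V, G.Adj h' aa ∧ s(aa, h') ∈ H.edges ∧ aa ∈ H.verts ∧ ¬ G.Adj w aa := by
    by_cases hwa : G.Adj w (H.emb (j+1))
    · by_cases hwb : G.Adj w (H.emb (j-1))
      · exfalso
        have hnab : ¬ G.Adj (H.emb (j+1)) (H.emb (j-1)) :=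
          fun h => hcnadj (H.emb.map_rel_iff.mp h)
        have hneab : H.emb (j+1) ≠ H.emb (j-1) := fun h => hcne (H.emb.injective h)
        exact aux_flap4 G hflap H hHlen w (H.emb (j+1)) h' (H.emb (j-1))
          hwa haa.symm hbb hwb.symm (fun h => hh'w h.symm) hnab hwneh' hneab hea
      · exact ⟨H.emb (j-1), hbb, heb, ⟨j-1, rfl⟩, hwb⟩
    · exact ⟨H.emb (j+1), haa, hea, ⟨j+1, rfl⟩, hwa⟩
  have haaneh' : aa ≠ h' := (G.ne_of_adj haah').symm
  have hwneaa : w ≠ aa := fun he => hh'w (he ▸ haah')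
  have hxneaa : x ≠ aa := fun he => hxh' (he ▸ haah').symm
  -- the key construction: a 4-sunspot, given a suitable pendant p at z
  have key : ∀ z z' p : V, z ∉ H.verts → z' ∉ H.verts → G.Adj x z → G.Adj x z' →
      G.Adj h' z → G.Adj h' z' → z ≠ z' → G.Adj z p → ¬ G.Adj z' p → ¬ G.Adj w p →
      False := by
    intro z z' p hzH hz'H hxz hxz' hh'z hh'z' hzz' hzp hz'p hwp
    have hnzz' : ¬ G.Adj z z' := fun h => tri hxz hxz' h
    have hxp : ¬ G.Adj x p := fun h => tri h hxz hzp.symm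
    have hh'p : ¬ G.Adj h' p := fun h => tri h hh'z hzp.symm
    have haaz : ¬ G.Adj aa z := fun h => tri h haah'.symm hh'z.symm
    have haaz' : ¬ G.Adj aa z' := fun h => tri h haah'.symm hh'z'.symm
    have haanez : aa ≠ z := fun he => hzH (he ▸ haaH)
    have haanez' : aa ≠ z' := fun he => hz'H (he ▸ haaH)
    have hpneh' : p ≠ h' := fun he => hz'p (he ▸ hh'z').symm
    have hxaa : ¬ G.Adj x aa := by
      intro h
      exact aux_flap4 G hflap H hHlen x aa h' z h haah'.symm hh'z hxz.symm
        hxh' haaz hxneh' haanez heaa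
    have hph' : ¬ G.Adj p h' := fun h => hh'p h.symm
    have hpaa : ¬ G.Adj p aa := by
      intro h
      exact aux_flap4 G hflap H hHlen p aa h' z h haah'.symm hh'z hzp
        hph' haaz hpneh' haanez heaa
    have hzw : ¬ G.Adj z w := fun h => tri hxz hxw h
    have hz'w : ¬ G.Adj z' w := fun h => tri hxz' hxw h
    -- distinctness
    have d1 : x ≠ z := G.ne_of_adj hxz
    have d2 : x ≠ z' := G.ne_of_adj hxz'
    have d3 : x ≠ w := G.ne_of_adj hxw
    have d4 : x ≠ p := fun he => hz'p (he ▸ hxz').symm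
    have d5 : z ≠ h' := (G.ne_of_adj hh'z).symm
    have d6 : z ≠ w := fun he => hh'w (he ▸ hh'z)
    have d7 : z ≠ p := G.ne_of_adj hzp
    have d8 : h' ≠ z' := G.ne_of_adj hh'z'
    have d9 : h' ≠ w := fun he => hxh' (he ▸ hxw)
    have d10 : h' ≠ p := fun he => hpneh' he.symm
    have d11 : h' ≠ aa := G.ne_of_adj haah'
    have d12 : z' ≠ w := fun he => hh'w (he ▸ hh'z')
    have d13 : z' ≠ p := fun he => hnzz' (he ▸ hzp)
    have d14 : z' ≠ aa := fun he => haanez' he.symm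
    have d15 : w ≠ p := fun he => hzw (he ▸ hzp)
    have d16 : z ≠ aa := fun he => haanez he.symm
    have d17 : p ≠ aa := fun he => hph' (he ▸ haah').symm
    apply hspot x z h' z' w p aa
    refine ⟨?_, hxz, hh'z.symm, hh'z', hxz'.symm, hxw, hzp, haah', hxh', hnzz',
      hxp, hxaa, hzw, (fun h => haaz h.symm),
      hh'w, hh'p, hz'w,
      hz'p, (fun h => haaz' h.symm), hwp, hwaa, hpaa⟩
    simp [List.nodup_cons, d1, d2, d3, d4, d5, d6, d7, d8, d9, d10, d11, d12, d13,
      d14, d15, d16, d17, hxneh', hxneaa, hzz', hwneaa, hwneh']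
  -- now apply liberality to z₁, z₂ and finish
  have hneq : z₁ ≠ z₂ := hne
  obtain ⟨⟨p, hp⟩, ⟨q, hq⟩⟩ := hlib z₁ z₂ hneq hnz12
  have hz₁p : G.Adj z₁ p := hp.1
  have hz₂p : ¬ G.Adj z₂ p := hp.2
  have hz₂q : G.Adj z₂ q := hq.1
  have hz₁q : ¬ G.Adj z₁ q := hq.2
  by_cases hwp : G.Adj w p
  · by_cases hwq : G.Adj w q
    · -- both adjacent to w : triangle or a 6-hole flap
      by_cases hpq : G.Adj p q
      · exact tri hwp hwq hpq
      · -- build the 6-hole (z₁, p, w, q, z₂, h') and flap with (x, z₁, h', z₂)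
        have hz₁w : ¬ G.Adj z₁ w := fun h => tri hxz₁ hxw h
        have hz₂w : ¬ G.Adj z₂ w := fun h => tri hxz₂ hxw h
        have hph' : ¬ G.Adj p h' := fun h => tri h hz₁p.symm hh'z₁
        have hqh' : ¬ G.Adj q h' := fun h => tri h hz₂q.symm hh'z₂
        obtain ⟨F6, hF6, he6⟩ := aux_mkHole6 G z₁ p w q z₂ h'
          hz₁p hwp.symm hwq hz₂q.symm hh'z₂.symm hh'z₁
          hz₁w hz₁q hnz12
          hpq (fun h => hz₂p h.symm) hph'
          (fun h => hz₂w h.symm) (fun h => hh'w h.symm) hqh'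
          (fun he => hh'w (by rw [← he]; exact hh'z₁))
          (fun he => hnz12 (by rw [he]; exact hz₂q.symm))
          hneq
          (fun he => hz₁q (by rw [← he]; exact hz₁p))
          (fun he => hnz12 (by rw [← he]; exact hz₁p))
          (fun he => hz₂p (by rw [he]; exact hh'z₂.symm))
          (fun he => hh'w (by rw [he]; exact hh'z₂))
          (fun he => hxh' (by rw [← he]; exact hxw))
          (fun he => hz₁q (by rw [he]; exact hh'z₁.symm))
        exact aux_flap4 G hflap F6 (le_of_eq hF6.symm) x z₁ h' z₂
          hxz₁ hh'z₁.symm hh'z₂ hxz₂.symm hxh' hnz12 hxneh' hneq he6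
    · exact key z₂ z₁ q hz₂H hz₁H hxz₂ hxz₁ hh'z₂ hh'z₁ hneq.symm hz₂q hz₁q hwq
  · exact key z₁ z₂ p hz₁H hz₂H hxz₁ hxz₂ hh'z₁ hh'z₂ hneq hz₁p hz₂p hwp
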